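/- If T is an unraveling of a σs-interpretation J preserving a witness W of a fact F, then T, viewed as an interpretation, still has W as a witness of F, and T is cycle-free except for W: every cycle in the Gaifman graph of T lies entirely within dom(W). In particular, outside dom(W) the Gaifman graph of T is a tree matching the tree structure of T. -/

import Mathlib

/-- A relational signature: relation names with arities. -/
structure Sig : Type 1 where
  Rel : Type
  ar : Rel → ℕ

/-- An interpretation of a signature: a domain and, for each relation,
a set of tuples (lists of the right length). -/
structure Interp (σ : Sig) : Type 1 where
  Dom : Type
  rel : σ.Rel → Set (List Dom)
  wf : ∀ R l, l ∈ rel R → l.length = σ.ar R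

/-- An atom over variables `V`. -/
structure Atom (σ : Sig) (V : Type) where
  R : σ.Rel
  args : Fin (σ.ar R) → V

/-- A conjunction of atoms over variables `V`. -/
abbrev Conj (σ : Sig) (V : Type) := List (Atom σ V)

def Atom.vmap {σ : Sig} {V W : Type} (f : V → W) (A : Atom σ V) : Atom σ W :=
  ⟨A.R, f ∘ A.args⟩

def Conj.vmap {σ : Sig} {V W : Type} (f : V → W) (Φ : Conj σ V) : Conj σ W :=
  Φ.map (Atom.vmap f)

def satAtom {σ : Sig} (I : Interp σ) {V : Type} (ν : V → I.Dom) (A : Atom σ V) : Prop :=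
  (List.ofFn fun i => ν (A.args i)) ∈ I.rel A.R

def satConj {σ : Sig} (I : Interp σ) {V : Type} (ν : V → I.Dom) (Φ : Conj σ V) : Prop :=
  ∀ A ∈ Φ, satAtom I ν A

/-- A variable occurs in an atom. -/
def occursIn {σ : Sig} {V : Type} (v : V) (A : Atom σ V) : Prop := ∃ i, A.args i = v

/-- The Gaifman graph of a conjunction of atoms. -/
def gaifmanC {σ : Sig} {V : Type} (Φ : Conj σ V) : SimpleGraph V where
  Adj u v := u ≠ v ∧ ∃ A ∈ Φ, occursIn u A ∧ occursIn v A
  symm := by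
    constructor
    intro u v h
    exact ⟨h.1.symm, by obtain ⟨A, hA, h1, h2⟩ := h.2; exact ⟨A, hA, h2, h1⟩⟩
  loopless := by constructor; intro v h; exact h.1 rfl

/-- The Gaifman graph of an interpretation. -/
def gaifmanI {σ : Sig} (I : Interp σ) : SimpleGraph I.Dom where
  Adj a b := a ≠ b ∧ ∃ R l, l ∈ I.rel R ∧ a ∈ l ∧ b ∈ l
  symm := by
    constructor
    intro a b h
    exact ⟨h.1.symm, by obtain ⟨R, l, hl, h1, h2⟩ := h.2; exact ⟨R, l, hl, h2, h1⟩⟩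
  loopless := by constructor; intro a h; exact h.1 rfl

/-- The relation names of the shredded signature. -/
inductive SRel (σ : Sig) : Type
  | low (R : σ.Rel) (h : σ.ar R ≤ 2)
  | elt
  | tag (R : σ.Rel) (h : 2 < σ.ar R)
  | proj (R : σ.Rel) (h : 2 < σ.ar R) (i : Fin (σ.ar R))

/-- The shredded signature σs. -/
def sSig (σ : Sig) : Sig where
  Rel := SRel σ
  ar := fun r => match r with
    | .low R _ => σ.ar R
    | .elt => 1
    | .tag _ _ => 1
    | .proj _ _ _ => 2

/-- Shredding of an atom (with the fresh tuple variable `t`). -/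
def shredAtom {σ : Sig} {V T : Type} (A : Atom σ V) (t : T) : Conj (sSig σ) (V ⊕ T) :=
  if h : σ.ar A.R ≤ 2 then
    [⟨SRel.low A.R h, fun i => Sum.inl (A.args i)⟩]
  else
    ⟨SRel.tag A.R (lt_of_not_ge h), fun _ => Sum.inr t⟩ ::
    (List.finRange (σ.ar A.R)).map (fun i =>
      ⟨SRel.proj A.R (lt_of_not_ge h) i,
       fun j => if j.val = 0 then Sum.inr t else Sum.inl (A.args i)⟩)

/-- Shredding of a conjunction of atoms: one fresh variable per atom. -/
def shredConj {σ : Sig} {V : Type} (Φ : Conj σ V) : Conj (sSig σ) (V ⊕ Fin Φ.length) :=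
  (List.finRange Φ.length).flatMap (fun k => shredAtom (Φ.get k) k)

/-- The fresh elements of the shredding of an interpretation: one per higher-arity tuple. -/
def HighTuple {σ : Sig} (I : Interp σ) : Type :=
  Σ R : σ.Rel, {l : List I.Dom // l ∈ I.rel R ∧ 2 < σ.ar R}

/-- The shredding of an interpretation. -/
def shredInterp {σ : Sig} (I : Interp σ) : Interp (sSig σ) where
  Dom := I.Dom ⊕ HighTuple I
  rel := fun r => match r with
    | .low R _ => {l | ∃ l₀ ∈ I.rel R, l = l₀.map Sum.inl}
    | .elt => {l | ∃ a : I.Dom, l = [Sum.inl a]}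
    | .tag R _ => {l | ∃ t : HighTuple I, t.1 = R ∧ l = [Sum.inr t]}
    | .proj R _ i => {l | ∃ t : HighTuple I, t.1 = R ∧
        ∃ a : I.Dom, t.2.val[i.val]? = some a ∧ l = [Sum.inr t, Sum.inl a]}
  wf := by
    rintro r l hl
    cases r with
    | low R h => obtain ⟨l₀, h₀, rfl⟩ := hl; simpa [sSig] using I.wf R l₀ h₀
    | elt => obtain ⟨a, rfl⟩ := hl; rfl
    | tag R h => obtain ⟨t, _, rfl⟩ := hl; rfl
    | proj R h i => obtain ⟨t, _, a, _, rfl⟩ := hl; rfl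

/-- Homomorphisms of interpretations. -/
def IsHom {σ : Sig} (I I' : Interp σ) (h : I.Dom → I'.Dom) : Prop :=
  ∀ R l, l ∈ I.rel R → l.map h ∈ I'.rel R

/-- Existential rules: body over variables `B`, head over `B ⊕ E`
(`B`-variables occurring in the head are the frontier). -/
structure ExRule (σ : Sig) : Type 1 where
  B : Type
  E : Type
  body : Conj σ B
  head : Conj σ (B ⊕ E)

def satRule {σ : Sig} (I : Interp σ) (τ : ExRule σ) : Prop :=
  ∀ ν : τ.B → I.Dom, satConj I ν τ.body →
    ∃ μ : τ.E → I.Dom, satConj I (Sum.elim ν μ) τ.head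

/-- Shredding of an existential rule. -/
def shredRule {σ : Sig} (τ : ExRule σ) : ExRule (sSig σ) where
  B := τ.B ⊕ Fin τ.body.length
  E := τ.E ⊕ Fin τ.head.length
  body := shredConj τ.body
  head := (shredConj τ.head).vmap
    (Sum.elim (Sum.elim (Sum.inl ∘ Sum.inl) (Sum.inr ∘ Sum.inl)) (fun k => Sum.inr (Sum.inr k)))

/-- The `Elt`-elements of a σs-interpretation. -/
def EltDom {σ : Sig} (J : Interp (sSig σ)) : Type :=
  {a : J.Dom // [a] ∈ J.rel SRel.elt}

/-- The unshredding of a σs-interpretation. -/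
def unshred {σ : Sig} (J : Interp (sSig σ)) : Interp σ where
  Dom := EltDom J
  rel := fun R =>
    if h : σ.ar R ≤ 2 then
      {l | l.length = σ.ar R ∧ l.map Subtype.val ∈ J.rel (SRel.low R h)}
    else
      {l | ∃ hl : l.length = σ.ar R, ∃ t : J.Dom,
        [t] ∈ J.rel (SRel.tag R (lt_of_not_ge h)) ∧
        ∀ i : Fin (σ.ar R),
          [t, (l.get (Fin.cast hl.symm i)).val] ∈ J.rel (SRel.proj R (lt_of_not_ge h) i)}
  wf := by
    intro R l hl
    by_cases h : σ.ar R ≤ 2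
    · rw [dif_pos h] at hl; exact hl.1
    · rw [dif_neg h] at hl; exact hl.1

/-- The structural conditions satisfied by shreddings (`Wellformed(σs)`). -/
def WellFormed {σ : Sig} (J : Interp (sSig σ)) : Prop :=
  (∀ (R : σ.Rel) (h : 2 < σ.ar R) (a : J.Dom),
      [a] ∈ J.rel (SRel.tag R h) → [a] ∉ J.rel SRel.elt) ∧
  (∀ (R : σ.Rel) (h : 2 < σ.ar R) (R' : σ.Rel) (h' : 2 < σ.ar R') (a : J.Dom),
      [a] ∈ J.rel (SRel.tag R h) → [a] ∈ J.rel (SRel.tag R' h') → R = R') ∧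
  (∀ a : J.Dom, [a] ∈ J.rel SRel.elt ∨ ∃ (R : σ.Rel) (h : 2 < σ.ar R), [a] ∈ J.rel (SRel.tag R h)) ∧
  (∀ (R : σ.Rel) (h : 2 < σ.ar R) (i : Fin (σ.ar R)) (t a : J.Dom),
      [t, a] ∈ J.rel (SRel.proj R h i) →
        [t] ∈ J.rel (SRel.tag R h) ∧ [a] ∈ J.rel SRel.elt) ∧
  (∀ (R : σ.Rel) (h : 2 < σ.ar R) (t : J.Dom), [t] ∈ J.rel (SRel.tag R h) →
      ∀ i : Fin (σ.ar R), ∃! a : J.Dom, [t, a] ∈ J.rel (SRel.proj R h i)) ∧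
  (∀ (R : σ.Rel) (h : σ.ar R ≤ 2) (l : List J.Dom), l ∈ J.rel (SRel.low R h) →
      ∀ a ∈ l, [a] ∈ J.rel SRel.elt)

/-- Redundancy-freeness: no two distinct tuple-elements code the same tuple. -/
def RedundancyFree {σ : Sig} (J : Interp (sSig σ)) : Prop :=
  ∀ (R : σ.Rel) (h : 2 < σ.ar R) (t t' : J.Dom) (f : Fin (σ.ar R) → J.Dom),
    (∀ i, [t, f i] ∈ J.rel (SRel.proj R h i) ∧ [t', f i] ∈ J.rel (SRel.proj R h i)) → t = t'

/-- Isomorphism of interpretations. -/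
structure InterpIso {σ : Sig} (I I' : Interp σ) where
  e : I.Dom ≃ I'.Dom
  hrel : ∀ R l, l ∈ I.rel R ↔ l.map e ∈ I'.rel R

/-- GC²: the guarded two-variable fragment with counting quantifiers
(atoms have arity ≤ 2; guards of counting quantifiers use both variables). -/
inductive GC2 (σ : Sig) : Type
  | atom (R : σ.Rel) (har : σ.ar R ≤ 2) (args : Fin (σ.ar R) → Fin 2)
  | eq (v w : Fin 2)
  | neg (φ : GC2 σ)
  | conj (φ ψ : GC2 σ)
  | count (v : Fin 2) (n : ℕ) (R : σ.Rel) (har : σ.ar R ≤ 2)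
      (gargs : Fin (σ.ar R) → Fin 2) (hg : ∀ w : Fin 2, ∃ i, gargs i = w)
      (φ : GC2 σ)

def GC2.eval {σ : Sig} (I : Interp σ) : GC2 σ → (Fin 2 → I.Dom) → Prop
  | .atom R _ args, ν => (List.ofFn fun i => ν (args i)) ∈ I.rel R
  | .eq v w, ν => ν v = ν w
  | .neg φ, ν => ¬ φ.eval I ν
  | .conj φ ψ, ν => φ.eval I ν ∧ ψ.eval I ν
  | .count v n R _ gargs _ φ, ν =>
      ∃ s : Finset I.Dom, n ≤ s.card ∧ ∀ b ∈ s,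
        ((List.ofFn fun i => Function.update ν v b (gargs i)) ∈ I.rel R) ∧
        φ.eval I (Function.update ν v b)

def GC2.size {σ : Sig} : GC2 σ → ℕ
  | .atom _ _ _ => 1
  | .eq _ _ => 1
  | .neg φ => φ.size + 1
  | .conj φ ψ => φ.size + ψ.size + 1
  | .count _ _ _ _ _ _ φ => φ.size + 1

/-- A GC² theory holds in an interpretation (formulas read universally closed). -/
def satTheory {σ : Sig} (I : Interp σ) (Θ : Set (GC2 σ)) : Prop :=
  ∀ φ ∈ Θ, ∀ ν : Fin 2 → I.Dom, φ.eval I ν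

/-- A tree-like interpretation: a rooted tree of bags. Each element is
introduced in a unique bag and occurs only there and in children of that bag;
each non-root bag shares exactly one element with its parent, introduced there. -/
structure TreeLike (σ : Sig) : Type 1 where
  Bag : Type
  root : Bag
  par : Bag → Bag
  hroot : par root = root
  reach : ∀ b, ∃ n : ℕ, par^[n] b = root
  Dom : Type
  bdom : Bag → Set Dom
  brel : Bag → σ.Rel → Set (List Dom)
  hwf : ∀ b R l, l ∈ brel b R → l.length = σ.ar R
  hsub : ∀ b R l, l ∈ brel b R → ∀ a ∈ l, a ∈ bdom b
  intro : Dom → Bag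
  hintro : ∀ u, u ∈ bdom (intro u)
  hocc : ∀ u c, u ∈ bdom c → c = intro u ∨ (par c = intro u ∧ c ≠ root)
  hshare : ∀ c, c ≠ root → ∃ u, intro u = par c ∧
    ∀ v, (v ∈ bdom (par c) ∧ v ∈ bdom c) ↔ v = u

/-- A tree-like interpretation, seen as an interpretation (the union of its bags). -/
def TreeLike.toInterp {σ : Sig} (T : TreeLike σ) : Interp σ where
  Dom := T.Dom
  rel := fun R => {l | ∃ b, l ∈ T.brel b R}
  wf := by rintro R l ⟨b, hb⟩; exact T.hwf b R l hb

/-- An unraveling of `J` preserving a witness `w` of the fact `F`: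
the root bag is the fact bag (a copy of the witness), all other bags have
two-element domains, and witness elements are introduced at the root. -/
structure Unraveling (σ : Sig) (J : Interp σ) {nF : ℕ} (F : Conj σ (Fin nF))
    (w : Fin nF → J.Dom) extends TreeLike σ where
  emb : Set.range w → Dom
  hinj : Function.Injective emb
  hrootdom : bdom root = Set.range emb
  hrootrel : ∀ R l, l ∈ brel root R ↔
    ∃ A ∈ F, A.R = R ∧ l = List.ofFn (fun i => emb ⟨w (A.args i), Set.mem_range_self _⟩)
  hsize2 : ∀ b, b ≠ root → ∃ u v, u ≠ v ∧ bdom b = {u, v}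
  hWroot : ∀ x, intro (emb x) = root

section Aux

variable {σ : Sig} {J : Interp σ} {nF : ℕ} {F : Conj σ (Fin nF)} {w : Fin nF → J.Dom}

open Classical in
/-- The depth of a bag: distance to the root along `par`. -/
noncomputable def Unraveling.bd (T : Unraveling σ J F w) (b : T.Bag) : ℕ :=
  Nat.find (T.reach b)

open Classical in
lemma Unraveling.bd_spec (T : Unraveling σ J F w) (b : T.Bag) :
    T.par^[T.bd b] b = T.root := Nat.find_spec (T.reach b)

open Classical in
lemma Unraveling.bd_le (T : Unraveling σ J F w) {b : T.Bag} {n : ℕ}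
    (h : T.par^[n] b = T.root) : T.bd b ≤ n := Nat.find_le h

open Classical in
lemma Unraveling.bd_eq_zero_iff (T : Unraveling σ J F w) {b : T.Bag} :
    T.bd b = 0 ↔ b = T.root := by
  constructor
  · intro h
    have := T.bd_spec b
    rwa [h, Function.iterate_zero_apply] at this
  · intro h
    have : T.bd b ≤ 0 := T.bd_le (n := 0) (by simpa using h)
    omega

lemma Unraveling.bd_par_lt (T : Unraveling σ J F w) {b : T.Bag} (hb : b ≠ T.root) :
    T.bd (T.par b) < T.bd b := by
  have h0 : T.bd b ≠ 0 := fun h => hb (T.bd_eq_zero_iff.mp h)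
  obtain ⟨m, hm⟩ := Nat.exists_eq_succ_of_ne_zero h0
  have hs := T.bd_spec b
  rw [hm, Function.iterate_succ_apply] at hs
  have := T.bd_le hs
  omega

lemma Unraveling.mem_range_iff (T : Unraveling σ J F w) {v : T.Dom} :
    v ∈ Set.range T.emb ↔ T.intro v = T.root := by
  constructor
  · rintro ⟨x, rfl⟩; exact T.hWroot x
  · intro h
    have := T.hintro v
    rw [h, T.hrootdom] at this
    exact this

/-- Structure of a non-root bag: exactly two elements, one (`s`) shared with the
parent and introduced there, one (`t`) introduced in the bag itself. -/
lemma Unraveling.bagStruct (T : Unraveling σ J F w) {c : T.Bag} (hc : c ≠ T.root) :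
    ∃ s t : T.Dom, s ≠ t ∧ T.bdom c = {s, t} ∧ T.intro s = T.par c ∧ T.intro t = c ∧
      (∀ z, (z ∈ T.bdom (T.par c) ∧ z ∈ T.bdom c) ↔ z = s) := by
  obtain ⟨u, v, huv, hdom⟩ := T.hsize2 c hc
  obtain ⟨s, hs, hiff⟩ := T.hshare c hc
  have hsc : s ∈ T.bdom c := ((hiff s).mpr rfl).2
  have key : ∀ t, t ∈ T.bdom c → t ≠ s → T.intro t = c := by
    intro t htc hts
    rcases T.hocc t c htc with h | ⟨h, _⟩
    · exact h.symm
    · have : t ∈ T.bdom (T.par c) := by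
        rw [h]; exact T.hintro t
      exact absurd ((hiff t).mp ⟨this, htc⟩) hts
  have hsmem : s = u ∨ s = v := by
    have := hsc; rw [hdom] at this
    simpa using this
  rcases hsmem with rfl | rfl
  · refine ⟨s, v, huv, hdom, hs, ?_, hiff⟩
    exact key v (by rw [hdom]; simp) (fun h => huv h.symm)
  · refine ⟨s, u, fun h => huv h.symm, by rw [hdom]; exact Set.pair_comm u s, hs, ?_, hiff⟩
    exact key u (by rw [hdom]; simp) huv

/-- Key adjacency analysis: an edge out of `x` whose endpoint is not deeper
than `x` must go to the unique element shared between the bag introducing `x`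
and its parent. -/
lemma Unraveling.adj_case (T : Unraveling σ J F w) {x y : T.Dom}
    (hadj : (gaifmanI T.toTreeLike.toInterp).Adj x y)
    (hx : T.intro x ≠ T.root) (hle : T.bd (T.intro y) ≤ T.bd (T.intro x)) :
    ∀ z, (z ∈ T.bdom (T.par (T.intro x)) ∧ z ∈ T.bdom (T.intro x)) ↔ z = y := by
  obtain ⟨hxy, R, l, ⟨b, hb⟩, hxl, hyl⟩ := hadj
  have hxb : x ∈ T.bdom b := T.hsub b R l hb x hxl
  have hyb : y ∈ T.bdom b := T.hsub b R l hb y hyl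
  by_cases hroot : b = T.root
  · exfalso
    apply hx
    rw [← T.mem_range_iff, ← T.hrootdom, ← hroot]
    exact hxb
  · obtain ⟨s, t, hst, hdom, his, hit, hiff⟩ := T.bagStruct hroot
    rw [hdom] at hxb hyb
    simp only [Set.mem_insert_iff, Set.mem_singleton_iff] at hxb hyb
    have hcase : (x = s ∧ y = t) ∨ (x = t ∧ y = s) := by
      rcases hxb with rfl | rfl <;> rcases hyb with rfl | rfl
      · exact absurd rfl hxy
      · exact Or.inl ⟨rfl, rfl⟩
      · exact Or.inr ⟨rfl, rfl⟩
      · exact absurd rfl hxy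
    rcases hcase with ⟨rfl, rfl⟩ | ⟨rfl, rfl⟩
    · exfalso
      rw [his, hit] at hle
      exact absurd hle (not_le.mpr (T.bd_par_lt hroot))
    · rw [hit]
      exact hiff

end Aux

/-- if `T` is an unraveling of `J` preserving a witness `w` of a fact
`F`, then `W` is still a witness of `F` in `T`, and `T` is cycle-free except for `W`:
every cycle of the Gaifman graph of `T` lies within `dom(W)`. In particular, the
Gaifman graph of `T` is acyclic outside `dom(W)`. -/

theorem unraveling_cycle_free (σ : Sig) (J : Interp σ) {nF : ℕ}
    (F : Conj σ (Fin nF)) (w : Fin nF → J.Dom) (hw : satConj J w F)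
    (T : Unraveling σ J F w) :
    satConj T.toTreeLike.toInterp (fun v => T.emb ⟨w v, Set.mem_range_self v⟩) F ∧
    (∀ (a : T.Dom) (p : (gaifmanI T.toTreeLike.toInterp).Walk a a), p.IsCycle →
      ∀ v ∈ p.support, v ∈ Set.range T.emb) ∧
    ((gaifmanI T.toTreeLike.toInterp).induce {v : T.Dom | v ∉ Set.range T.emb}).IsAcyclic := by
  classical
  have part1 : satConj T.toTreeLike.toInterp
      (fun v => T.emb ⟨w v, Set.mem_range_self v⟩) F := by
    intro A hA
    refine ⟨T.root, ?_⟩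
    exact (T.hrootrel _ _).mpr ⟨A, hA, rfl, rfl⟩
  have part2 : ∀ (a : T.Dom) (p : (gaifmanI T.toTreeLike.toInterp).Walk a a), p.IsCycle →
      ∀ v ∈ p.support, v ∈ Set.range T.emb := by
    intro a p hp v₀ hv₀
    by_contra hout
    -- pick a vertex of maximal depth on the cycle
    obtain ⟨x, hxarg⟩ : ∃ x : T.toTreeLike.toInterp.Dom, x ∈ p.support.argmax (fun v => T.bd (T.intro v)) := by
      rcases Option.eq_none_or_eq_some (p.support.argmax (fun v => T.bd (T.intro v)))
        with h | ⟨x, h⟩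
      · exact absurd (List.argmax_eq_none.mp h) p.support_ne_nil
      · exact ⟨x, h⟩
    have hxmem : x ∈ p.support := List.argmax_mem hxarg
    have hmax : ∀ v ∈ p.support, T.bd (T.intro v) ≤ T.bd (T.intro x) := fun v hv =>
      List.le_of_mem_argmax (f := fun v => T.bd (T.intro v)) hv hxarg
    -- x has positive depth, since v₀ is outside the root bag
    have hxroot : T.intro x ≠ T.root := by
      intro h
      have h1 : T.intro v₀ ≠ T.root := fun h' => hout (T.mem_range_iff.mpr h')
      have h2 : T.bd (T.intro v₀) ≠ 0 := fun h' => h1 (T.bd_eq_zero_iff.mp h')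
      have h3 := hmax v₀ hv₀
      have h4 : T.bd (T.intro x) = 0 := T.bd_eq_zero_iff.mpr h
      omega
    -- rotate the cycle to start at x
    have hp' : (p.rotate x hxmem).IsCycle := hp.rotate hxmem
    have htailmax : ∀ v ∈ (p.rotate x hxmem).support.tail,
        T.bd (T.intro v) ≤ T.bd (T.intro x) := by
      intro v hv
      have hrot := p.support_rotate x hxmem
      exact hmax v (List.mem_of_mem_tail (hrot.mem_iff.mp hv))
    obtain ⟨b, hadjb, q, hq⟩ := SimpleGraph.Walk.not_nil_iff.mp hp'.not_nil
    -- q is not nil since cycles have length ≥ 3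
    have h3 : 3 ≤ (p.rotate x hxmem).length := hp'.three_le_length
    have hqlen : 0 < q.length := by
      have : (p.rotate x hxmem).length = q.length + 1 := by rw [hq]; simp
      omega
    have hqnn : ¬ q.Nil := SimpleGraph.Walk.not_nil_iff_lt_length.mpr hqlen
    have hqrnn : ¬ q.reverse.Nil := by
      rw [SimpleGraph.Walk.nil_iff_length_eq] at hqnn ⊢
      rwa [SimpleGraph.Walk.length_reverse]
    obtain ⟨c, hadjc, q₂, hq₂⟩ := SimpleGraph.Walk.not_nil_iff.mp hqrnn
    -- both b and c are in the tail of the rotated walk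
    have htail : (p.rotate x hxmem).support.tail = q.support := by rw [hq]; simp
    have hbmem : b ∈ (p.rotate x hxmem).support.tail := by
      rw [htail]; exact q.start_mem_support
    have hcmem : c ∈ (p.rotate x hxmem).support.tail := by
      rw [htail]
      have : c ∈ q.reverse.support := by
        rw [hq₂]; simp [SimpleGraph.Walk.support_cons]
      rwa [SimpleGraph.Walk.support_reverse, List.mem_reverse] at this
    -- b and c are both the unique shared element of the bag introducing x
    have hub := T.adj_case hadjb hxroot (htailmax b hbmem)
    have huc := T.adj_case hadjc hxroot (htailmax c hcmem)
    have hbc : b = c := (huc b).mp ((hub b).mpr rfl)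
    -- but then the first and last edges of the cycle coincide
    have hedge_c : s(x, c) ∈ q.edges := by
      have : s(x, c) ∈ q.reverse.edges := by
        rw [hq₂]; simp [SimpleGraph.Walk.edges_cons]
      rwa [SimpleGraph.Walk.edges_reverse, List.mem_reverse] at this
    have hnodup : (p.rotate x hxmem).edges.Nodup := hp'.edges_nodup
    rw [hq, SimpleGraph.Walk.edges_cons, List.nodup_cons] at hnodup
    exact hnodup.1 (hbc ▸ hedge_c)
  refine ⟨part1, part2, ?_⟩
  intro a' p' hp'
  set ι : ((gaifmanI T.toTreeLike.toInterp).induce {v : T.Dom | v ∉ Set.range T.emb}) →g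
      gaifmanI T.toTreeLike.toInterp := ⟨Subtype.val, fun h => h⟩ with hι
  have hinj : Function.Injective ι := Subtype.val_injective
  have hcyc : (p'.map ι).IsCycle := hp'.map hinj
  have := part2 _ (p'.map ι) hcyc (ι a') (SimpleGraph.Walk.start_mem_support _)
  exact a'.2 this
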